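/- arXiv:1409.8523 — 2 statements merged into one kernel-verified Lean document; each statement's English description precedes it below -/
import Mathlib

section
/- Let X be a locally compact Hausdorff space and m : X → ℂ with reg(m) dense in X. Then: (1) t_m is normal, i.e. t_m* t_m = t_m t_m*, and t_m* t_m is essentially self-adjoint ((t_m* t_m)* = (t_m* t_m)**); (2) D(t_m* t_m) is an essential core for t_m, i.e. Graph(t_m restricted to D(t_m* t_m))^⊥ = Graph(t_m)^⊥; (3) Range(1 + t_m* t_m) = {g ∈ C₀(X) : g(x) = 0 for all x ∈ singsuppʳ(m)}, and in particular this range is essential. -/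
open scoped RightActions Pointwise

noncomputable section

namespace CStarReg

variable (A : Type*)

/-- The orthogonal complement of a subset of a Hilbert C*-module with respect to the
`A`-valued inner product. -/
def ortho {E : Type*} [Zero A] [Inner A E] (S : Set E) : Set E :=
  {x | ∀ y ∈ S, (inner A x y : A) = 0}

/-- A subset of a Hilbert C*-module is *essential* if its orthogonal complement is trivial. -/
def IsEssential {E : Type*} [Zero A] [Zero E] [Inner A E] (S : Set E) : Prop :=
  ortho A S = {0}

/-- A subset is *orthogonally closed* if it coincides with its double orthogonal complement. -/
def IsOrthoClosedSet {E : Type*} [Zero A] [Inner A E] (S : Set E) : Prop :=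
  ortho A (ortho A S) = S

/-- The `A`-valued inner product on the direct sum `E ⊕ F` of two Hilbert C*-modules. -/
instance prodInner {E F : Type*} [Add A] [Inner A E] [Inner A F] : Inner A (E × F) :=
  ⟨fun p q => (inner A p.1 q.1 : A) + (inner A p.2 q.2 : A)⟩

/-- A (not necessarily densely or essentially defined) `ℂ`-linear and `A`-linear operator
from `E` to `F`, encoded by its graph. -/
structure Unbounded (E F : Type*) [AddCommGroup E] [AddCommGroup F]
    [Module ℂ E] [Module ℂ F] [SMul Aᵐᵒᵖ E] [SMul Aᵐᵒᵖ F] where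
  graph : Set (E × F)
  zero_mem : ((0 : E), (0 : F)) ∈ graph
  add_mem : ∀ ⦃p q : E × F⦄, p ∈ graph → q ∈ graph → p + q ∈ graph
  smul_mem : ∀ (c : ℂ) ⦃p : E × F⦄, p ∈ graph → c • p ∈ graph
  smulA_mem : ∀ (a : A) ⦃p : E × F⦄, p ∈ graph → (p.1 <• a, p.2 <• a) ∈ graph
  single_valued : ∀ ⦃y : F⦄, ((0 : E), y) ∈ graph → y = 0

/-- An adjointable (everywhere defined, with everywhere defined adjoint) operator between
Hilbert C*-modules. -/
structure Adjointable (E F : Type*) [Inner A E] [Inner A F] where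
  toFun : E → F
  adjFun : F → E
  adjoint_eq : ∀ (x : E) (y : F), (inner A (toFun x) y : A) = inner A x (adjFun y)

section Operators

variable {A}
variable {E F G H : Type*} [AddCommGroup E] [AddCommGroup F] [AddCommGroup G] [AddCommGroup H]
  [Module ℂ E] [Module ℂ F] [Module ℂ G] [Module ℂ H]
  [SMul Aᵐᵒᵖ E] [SMul Aᵐᵒᵖ F] [SMul Aᵐᵒᵖ G] [SMul Aᵐᵒᵖ H]

namespace Unbounded

/-- The domain of an operator. -/
def dom (t : Unbounded A E F) : Set E := Prod.fst '' t.graph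

/-- The range of an operator. -/
def ran (t : Unbounded A E F) : Set F := Prod.snd '' t.graph

/-- The null space of an operator. -/
def ker (t : Unbounded A E F) : Set E := {x | (x, (0 : F)) ∈ t.graph}

/-- `t ⊆ s`, i.e. `s` extends `t`. -/
def le (t s : Unbounded A E F) : Prop := t.graph ⊆ s.graph

end Unbounded

variable (A)

section WithInner

variable [Inner A E] [Inner A F] [Inner A G] [Inner A H] [Add A]

/-- The graph of the adjoint: `(y, z)` belongs to `adjSet A g` iff
`⟪t x, y⟫ = ⟪x, z⟫` for all `(x, t x) ∈ g`. -/
def adjSet (g : Set (E × F)) : Set (F × E) :=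
  {q | ∀ p ∈ g, (inner A p.2 q.1 : A) = inner A p.1 q.2}

end WithInner

/-- Composition of graphs. -/
def compSet (g₂ : Set (F × G)) (g₁ : Set (E × F)) : Set (E × G) :=
  {p | ∃ y, (p.1, y) ∈ g₁ ∧ (y, p.2) ∈ g₂}

/-- The graph of `1 + s` where `g` is the graph of `s`. -/
def oneAddSet (g : Set (E × E)) : Set (E × E) :=
  {p | ∃ y, (p.1, y) ∈ g ∧ p.2 = p.1 + y}

variable {A}

namespace Unbounded

variable [Inner A E] [Inner A F] [Add A] [Zero A]

/-- The graph of the adjoint operator `t*`. -/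
def adjGraph (t : Unbounded A E F) : Set (F × E) := adjSet A t.graph

/-- The domain of the adjoint operator `t*`. -/
def adjDom (t : Unbounded A E F) : Set F := Prod.fst '' (adjSet A t.graph)

/-- `s` is the adjoint of `t`. -/
def IsAdjointOf (s : Unbounded A F E) (t : Unbounded A E F) : Prop :=
  s.graph = adjSet A t.graph

/-- `t` is essentially defined, i.e. its domain has trivial orthogonal complement. -/
def EssentiallyDefined (t : Unbounded A E F) : Prop := IsEssential A t.dom

/-- `t` is orthogonally closed, i.e. its graph coincides with its double orthogonal
complement in `E ⊕ F`. -/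
def OrthoClosed (t : Unbounded A E F) : Prop := ortho A (ortho A t.graph) = t.graph

/-- `t` is graph regular: essentially defined, orthogonally closed, and its graph is
orthogonally complemented in `E ⊕ F`. -/
def GraphRegular (t : Unbounded A E F) : Prop :=
  t.EssentiallyDefined ∧ t.OrthoClosed ∧ t.graph + ortho A t.graph = Set.univ

/-- The graph of `t* t`. -/
def adjCompGraph (t : Unbounded A E F) : Set (E × E) := compSet (adjSet A t.graph) t.graph

/-- The graph of `t t*`. -/
def compAdjGraph (t : Unbounded A E F) : Set (F × F) := compSet t.graph (adjSet A t.graph)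

/-- `a = (1 + t* t)⁻¹` as an everywhere defined map. -/
def IsAt (t : Unbounded A E F) (a : E → E) : Prop :=
  ∀ x : E, (a x, x) ∈ oneAddSet t.adjCompGraph

/-- `a⋆ = (1 + t t*)⁻¹` as an everywhere defined map. -/
def IsAtStar (t : Unbounded A E F) (a : F → F) : Prop :=
  ∀ y : F, (a y, y) ∈ oneAddSet t.compAdjGraph

/-- `b = t ∘ a` as an everywhere defined map (where `a = (1 + t* t)⁻¹`, this is `b_t`). -/
def IsBt (t : Unbounded A E F) (a : E → E) (b : E → F) : Prop :=
  ∀ x : E, (a x, b x) ∈ t.graph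

end Unbounded

namespace Adjointable

variable [Inner A E] [Inner A F]

/-- Self-adjointness of an adjointable operator. -/
def IsSelfAdj (a : Adjointable A E E) : Prop := a.adjFun = a.toFun

/-- Positivity of an adjointable operator: `⟪x, a x⟫ ≥ 0` for all `x`. -/
def Nonneg [LE A] [Zero A] (a : Adjointable A E E) : Prop :=
  ∀ x : E, (0 : A) ≤ inner A x (a.toFun x)

/-- `r` is the positive square root of `a` in the C*-algebra `Adj(E)`. -/
def IsPosSqrtOf [LE A] [Zero A] (r a : Adjointable A E E) : Prop :=
  r.Nonneg ∧ r.adjFun = r.toFun ∧ ∀ x : E, r.toFun (r.toFun x) = a.toFun x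

/-- The kernel of an adjointable operator is trivial. -/
def KerTrivial (a : Adjointable A E F) : Prop := ∀ x : E, a.toFun x = 0 → x = 0

end Adjointable

variable (A)

/-- The graph of the projection onto a submodule `G` (with domain `G ⊕ G^⊥`). -/
def projSet [Zero A] [Inner A E] (G : Set E) : Set (E × E) :=
  {p | ∃ x ∈ G, ∃ y ∈ ortho A G, p = (x + y, x)}

/-- The restriction of a graph to those points whose first component lies in `D`. -/
def restrictSet (g : Set (E × F)) (D : Set E) : Set (E × F) := {p ∈ g | p.1 ∈ D}

end Operators

end CStarReg

section CommutativeCase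

open CStarReg Unbounded

open scoped ZeroAtInfty

variable {X : Type*} [TopologicalSpace X] [LocallyCompactSpace X] [T2Space X]

/-- The largest open subset of `X` on which `m` is continuous. -/
def reg (m : X → ℂ) : Set X := ⋃₀ {U : Set X | IsOpen U ∧ ContinuousOn m U}

/-- The set of boundary points of `reg m` near which `m` admits a continuous `ℂ`-valued
extension from `reg m`. -/
def regB (m : X → ℂ) : Set X :=
  {x ∈ frontier (reg m) | ∃ U : Set X, IsOpen U ∧ U ⊆ closure (reg m) ∧ x ∈ U ∧
    ∃ mt : X → ℂ, ContinuousOn mt U ∧ Set.EqOn m mt (U ∩ reg m)}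

/-- The set of boundary points of `reg m` near which `m` admits a continuous extension
with values in the Riemann sphere `ℂ ∪ {∞}` taking the value `∞` there. -/
def regInfty (m : X → ℂ) : Set X :=
  {x ∈ frontier (reg m) | ∃ U : Set X, IsOpen U ∧ U ⊆ closure (reg m) ∧ x ∈ U ∧
    ∃ mt : X → OnePoint ℂ, ContinuousOn mt U ∧
      (∀ y ∈ U ∩ reg m, mt y = (m y : OnePoint ℂ)) ∧ mt x = OnePoint.infty}

/-- The residual singular support `singsuppʳ(m)`. -/
def singSuppR (m : X → ℂ) : Set X := frontier (reg m) \ (regB m ∪ regInfty m)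

/-- `h'` is the canonical extension `ĥ` of `h`: it agrees with `h` off `regB h` and with
the (unique) continuous extension of `h` at points of `regB h`. -/
def IsHatOf (h h' : X → ℂ) : Prop :=
  (∀ x ∉ regB h, h' x = h x) ∧
  ∀ x ∈ regB h, ∀ (U : Set X) (mt : X → ℂ), IsOpen U → U ⊆ closure (reg h) → x ∈ U →
    ContinuousOn mt U → Set.EqOn h mt (U ∩ reg h) → h' x = mt x

/-- `g` is the graph of the multiplication operator `t_m` on `C₀(X)`:
`D(t_m) = {f ∈ C₀(X) | (mf)^ ∈ C₀(X)}` and `t_m f = (mf)^`. -/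
def IsMulOpGraph (m : X → ℂ) (g : Set (C₀(X, ℂ) × C₀(X, ℂ))) : Prop :=
  g = {p | IsHatOf (fun x => m x * p.1 x) (fun x => p.2 x)}

set_option linter.unusedSectionVars false
set_option linter.unusedVariables false

section AuxTopology

open Filter Topology Set
open scoped Classical

variable {m : X → ℂ}

lemma isOpen_reg (m : X → ℂ) : IsOpen (reg m) :=
  isOpen_sUnion fun _ hU => hU.1

lemma continuousOn_reg (m : X → ℂ) : ContinuousOn m (reg m) := by
  intro x hx
  obtain ⟨U, hU, hxU⟩ := hx
  exact ((hU.2 x hxU).continuousAt (hU.1.mem_nhds hxU)).continuousWithinAt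

lemma subset_reg {U : Set X} (hU : IsOpen U) (h : ContinuousOn m U) : U ⊆ reg m :=
  fun x hx => ⟨U, ⟨hU, h⟩, hx⟩

lemma not_frontier_of_reg {x : X} (hx : x ∈ reg m) : x ∉ frontier (reg m) := by
  rw [(isOpen_reg m).frontier_eq]
  exact fun h => h.2 hx

/-- Uniqueness of limits along a dense-in set. -/
lemma eqAt {α : Type*} [TopologicalSpace α] [T2Space α] {S : Set X} {x : X}
    (hx : x ∈ closure S) {φ ψ : X → α}
    (hφ : ContinuousWithinAt φ S x) (hψ : ContinuousWithinAt ψ S x)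
    (h : Set.EqOn φ ψ S) : φ x = ψ x := by
  have hne : (𝓝[S] x).NeBot := mem_closure_iff_nhdsWithin_neBot.mp hx
  refine tendsto_nhds_unique hφ (hψ.congr' ?_)
  exact eventually_nhdsWithin_of_forall fun y hy => (h hy).symm

/-- Two local continuous extensions of `κ` from a dense set agree at common points. -/
lemma locUnique {α : Type*} [TopologicalSpace α] [T2Space α] {W U₁ U₂ : Set X}
    (hW : Dense W) {κ φ₁ φ₂ : X → α} (h1 : IsOpen U₁) (h2 : IsOpen U₂)
    (hc1 : ContinuousOn φ₁ U₁) (hc2 : ContinuousOn φ₂ U₂)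
    (he1 : Set.EqOn κ φ₁ (U₁ ∩ W)) (he2 : Set.EqOn κ φ₂ (U₂ ∩ W))
    {x : X} (hx1 : x ∈ U₁) (hx2 : x ∈ U₂) : φ₁ x = φ₂ x := by
  have hxc : x ∈ closure ((U₁ ∩ U₂) ∩ W) :=
    (h1.inter h2).inter_closure ⟨⟨hx1, hx2⟩, by rw [hW.closure_eq]; trivial⟩
  refine eqAt hxc (((hc1.continuousAt (h1.mem_nhds hx1))).continuousWithinAt.mono
      (fun y hy => hy.1.1) : ContinuousWithinAt φ₁ _ x)
    (((hc2.continuousAt (h2.mem_nhds hx2))).continuousWithinAt.mono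
      (fun y hy => hy.1.2)) ?_
  intro y hy
  exact (he1 ⟨hy.1.1, hy.2⟩).symm.trans (he2 ⟨hy.1.2, hy.2⟩)

/-- The multiplication operator graph is exactly the set of pairs agreeing with
multiplication by `m` on `reg m`. -/
lemma graph_eq (hm : Dense (reg m)) {g : Set (C₀(X, ℂ) × C₀(X, ℂ))}
    (hg : IsMulOpGraph m g) :
    g = {p | ∀ x ∈ reg m, p.2 x = m x * p.1 x} := by
  rw [hg]
  ext ⟨f, g'⟩
  simp only [Set.mem_setOf_eq]
  set h : X → ℂ := fun x => m x * f x with hh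
  have hRh : reg m ⊆ reg h :=
    subset_reg (isOpen_reg m) ((continuousOn_reg m).mul (map_continuous f).continuousOn)
  have hdh : Dense (reg h) := hm.mono hRh
  -- agreement on all of `reg h` follows from agreement on `reg m`
  have sub : (∀ x ∈ reg m, g' x = h x) → ∀ x ∈ reg h, g' x = h x := by
    intro heq x hx
    refine eqAt (S := reg m) (by rw [hm.closure_eq]; trivial)
      (map_continuous g').continuousAt.continuousWithinAt
      (((continuousOn_reg h).continuousAt ((isOpen_reg h).mem_nhds hx)).continuousWithinAt) heq
  constructor
  · -- `IsHatOf` implies agreement on `reg m`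
    intro hhat x hx
    have hxr : x ∉ regB h := fun hB => not_frontier_of_reg (hRh hx) hB.1
    exact hhat.1 x hxr
  · intro heq
    have sub' := sub heq
    constructor
    · intro x hxB
      by_contra hne
      apply hxB
      have hxr : x ∉ reg h := fun hxr => hne (sub' x hxr)
      refine ⟨?_, Set.univ, isOpen_univ, by rw [hdh.closure_eq], trivial, ⇑g',
        (map_continuous g').continuousOn, fun y hy => (sub' y hy.2).symm⟩
      rw [(isOpen_reg h).frontier_eq]
      exact ⟨hdh x, hxr⟩
    · intro x hxB U mt hU hUc hxU hmt hEq
      have hxc : x ∈ closure (U ∩ reg h) := hU.inter_closure ⟨hxU, hUc hxU⟩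
      refine eqAt hxc (map_continuous g').continuousAt.continuousWithinAt
        ((hmt x hxU).mono inter_subset_left) ?_
      intro y hy
      exact (sub' y hy.2).trans (hEq hy)

/-- Construct an element of `C₀` from a continuous function dominated by a `C₀` function. -/
lemma mkC₀ {F : X → ℂ} (g : C₀(X, ℂ)) (hc : Continuous F) (hb : ∀ x, ‖F x‖ ≤ ‖g x‖) :
    ∃ j : C₀(X, ℂ), ⇑j = F := by
  refine ⟨⟨⟨F, hc⟩, ?_⟩, rfl⟩
  have hg : Filter.Tendsto (fun x => ‖g x‖) (Filter.cocompact X) (𝓝 0) := by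
    simpa using g.zero_at_infty'.norm
  exact squeeze_zero_norm hb hg

/-- A bump function at a point inside an open set. -/
lemma exists_bump {V : Set X} (hV : IsOpen V) {x₀ : X} (hx : x₀ ∈ V) :
    ∃ f : C₀(X, ℂ), f x₀ = 1 ∧ HasCompactSupport ⇑f ∧ tsupport ⇑f ⊆ V := by
  obtain ⟨K, hK, hxK, hKV⟩ := exists_compact_subset hV hx
  obtain ⟨χ, h1, h0, hcs, hmem⟩ := exists_continuous_one_zero_of_isCompact
    (isCompact_singleton (x := x₀)) isOpen_interior.isClosed_compl
    (by simpa [Set.disjoint_singleton_left] using hxK)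
  have hcont : Continuous fun x => ((χ x : ℝ) : ℂ) :=
    Complex.continuous_ofReal.comp χ.continuous
  have hsupp : Function.support (fun x => ((χ x : ℝ) : ℂ)) ⊆ interior K := by
    intro x hx'
    by_contra hxn
    exact hx' (by simp [h0 hxn])
  have hts : tsupport (fun x => ((χ x : ℝ) : ℂ)) ⊆ K :=
    (closure_mono hsupp).trans ((IsClosed.closure_subset_iff hK.isClosed).mpr interior_subset)
  have hcs' : HasCompactSupport fun x => ((χ x : ℝ) : ℂ) :=
    HasCompactSupport.of_support_subset_isCompact hK (hsupp.trans interior_subset)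
  refine ⟨⟨⟨fun x => ((χ x : ℝ) : ℂ), hcont⟩, hcs'.is_zero_at_infty⟩, ?_, hcs', hts.trans hKV⟩
  simp [h1 rfl]

/-- Multiplication of a compactly supported (in `reg m`) `C₀` function by a function
continuous on `reg m`. -/
lemma mulCpt {w : X → ℂ} (hw : ContinuousOn w (reg m)) {f : C₀(X, ℂ)}
    (hc : HasCompactSupport ⇑f) (hs : tsupport ⇑f ⊆ reg m) :
    ∃ g : C₀(X, ℂ), ∀ x, g x = if x ∈ reg m then w x * f x else 0 := by
  set g₀ : X → ℂ := fun x => if x ∈ reg m then w x * f x else 0 with hg₀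
  have hcont : Continuous g₀ := by
    rw [continuous_iff_continuousAt]
    intro x
    by_cases hx : x ∈ reg m
    · have h1 : ContinuousAt (fun y => w y * f y) x :=
        (hw.continuousAt ((isOpen_reg m).mem_nhds hx)).mul (map_continuous f).continuousAt
      refine h1.congr ?_
      filter_upwards [(isOpen_reg m).mem_nhds hx] with y hy
      simp [hg₀, if_pos hy]
    · have hxs : x ∉ tsupport ⇑f := fun h => hx (hs h)
      have h0 : g₀ =ᶠ[𝓝 x] fun _ => (0 : ℂ) := by
        filter_upwards [(isClosed_tsupport ⇑f).isOpen_compl.mem_nhds hxs] with y hy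
        have hfy : f y = 0 := image_eq_zero_of_notMem_tsupport hy
        by_cases hyr : y ∈ reg m <;> simp [hg₀, hyr, hfy]
      exact continuousAt_const.congr h0.symm
  have hz : Filter.Tendsto g₀ (Filter.cocompact X) (𝓝 0) := by
    refine Filter.Tendsto.congr' ?_ tendsto_const_nhds
    filter_upwards [hc.compl_mem_cocompact] with y hy
    have hfy : f y = 0 := image_eq_zero_of_notMem_tsupport hy
    by_cases hyr : y ∈ reg m <;> simp [hg₀, hyr, hfy]
  exact ⟨⟨⟨g₀, hcont⟩, hz⟩, fun x => rfl⟩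

end AuxTopology

variable [PartialOrder C₀(X, ℂ)] [StarOrderedRing C₀(X, ℂ)]

section AuxOperator

open Filter Topology Set CStarReg

variable {m : X → ℂ}

lemma inner_def' (f g : C₀(X, ℂ)) : (inner C₀(X, ℂ) f g : C₀(X, ℂ)) = star f * g :=
  show g * star f = star f * g from mul_comm _ _

lemma inner_apply' (f g : C₀(X, ℂ)) (x : X) :
    (inner C₀(X, ℂ) f g : C₀(X, ℂ)) x = (starRingEnd ℂ) (f x) * g x := by
  rw [inner_def']
  simp [Complex.star_def]

lemma inner_prod_apply (u p : C₀(X, ℂ) × C₀(X, ℂ)) (x : X) :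
    (inner C₀(X, ℂ) u p : C₀(X, ℂ)) x
      = (starRingEnd ℂ) (u.1 x) * p.1 x + (starRingEnd ℂ) (u.2 x) * p.2 x := by
  show ((inner C₀(X, ℂ) u.1 p.1 : C₀(X, ℂ)) + (inner C₀(X, ℂ) u.2 p.2 : C₀(X, ℂ))) x = _
  rw [ZeroAtInftyContinuousMap.coe_add, Pi.add_apply, inner_apply', inner_apply']

/-- Computation of the adjoint graph of any set sandwiched between the compactly-supported
pairs and the full multiplication relation. -/
lemma adjSet_eq_of {R : Set X} (hR : Dense R) (w : X → ℂ) (P : Set (C₀(X, ℂ) × C₀(X, ℂ)))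
    (hup : ∀ p ∈ P, ∀ x ∈ R, p.2 x = w x * p.1 x)
    (hlo : ∀ x₀ ∈ R, ∃ p ∈ P, p.1 x₀ = 1 ∧ p.2 x₀ = w x₀) :
    adjSet C₀(X, ℂ) P = {q | ∀ x ∈ R, q.2 x = (starRingEnd ℂ) (w x) * q.1 x} := by
  ext q
  constructor
  · intro hq x₀ hx₀
    obtain ⟨p, hp, h1, h2⟩ := hlo x₀ hx₀
    have := congrArg (fun u : C₀(X, ℂ) => u x₀) (hq p hp)
    simpa [inner_apply', h1, h2] using this.symm
  · intro hq p hp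
    have : ⇑(inner C₀(X, ℂ) p.2 q.1 : C₀(X, ℂ)) = ⇑(inner C₀(X, ℂ) p.1 q.2 : C₀(X, ℂ)) := by
      refine Continuous.ext_on hR (map_continuous _) (map_continuous _) ?_
      intro x hx
      rw [inner_apply', inner_apply', hup p hp x hx, hq x hx, map_mul]
      ring
    exact DFunLike.coe_injective this

/-- The basic pointwise identity `|g|² = k ⬝ conj f` for a multiplication-pair. -/
lemma key_identity {R : Set X} (hR : Dense R) {μ : X → ℂ} {f g k : C₀(X, ℂ)}
    (hg : ∀ x ∈ R, g x = μ x * f x)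
    (hk : ∀ x ∈ R, k x = (starRingEnd ℂ) (μ x) * μ x * f x) :
    ∀ x, ((Complex.normSq (g x) : ℝ) : ℂ) = k x * (starRingEnd ℂ) (f x) := by
  have h : (fun x => ((Complex.normSq (g x) : ℝ) : ℂ))
      = fun x => k x * (starRingEnd ℂ) (f x) := by
    refine Continuous.ext_on hR
      (Complex.continuous_ofReal.comp (Complex.continuous_normSq.comp (map_continuous g)))
      ((map_continuous k).mul (Complex.continuous_conj.comp (map_continuous f))) ?_
    intro x hx
    show ((Complex.normSq (g x) : ℝ) : ℂ) = k x * (starRingEnd ℂ) (f x)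
    rw [Complex.normSq_eq_conj_mul_self, hg x hx, hk x hx, map_mul]
    ring
  exact fun x => congrFun h x

/-- Construction of the "conjugate multiplication" witness. -/
lemma exists_conj_witness {R : Set X} (hR : Dense R) {μ : X → ℂ} {f g k : C₀(X, ℂ)}
    (hg : ∀ x ∈ R, g x = μ x * f x)
    (hk : ∀ x ∈ R, k x = (starRingEnd ℂ) (μ x) * μ x * f x) :
    ∃ j : C₀(X, ℂ), ∀ x ∈ R, j x = (starRingEnd ℂ) (μ x) * f x := by
  have key := key_identity hR hg hk
  set j₀ : X → ℂ := fun x =>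
    if f x = 0 then 0 else (starRingEnd ℂ) (g x) * f x * ((starRingEnd ℂ) (f x))⁻¹ with hj₀
  have hb : ∀ x, ‖j₀ x‖ ≤ ‖g x‖ := by
    intro x
    by_cases hfx : f x = 0
    · simp [hj₀, hfx]
    · have hfn : ‖f x‖ ≠ 0 := norm_ne_zero_iff.mpr hfx
      have : ‖j₀ x‖ = ‖g x‖ := by
        rw [hj₀]
        simp only [if_neg hfx, norm_mul, norm_inv, RCLike.norm_conj]
        rw [mul_assoc, mul_inv_cancel₀ hfn, mul_one]
      rw [this]
  have hg0 : ∀ x, f x = 0 → g x = 0 := by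
    intro x hfx
    have := key x
    rw [hfx, map_zero, mul_zero] at this
    have h2 : Complex.normSq (g x) = 0 := by exact_mod_cast this
    exact (Complex.normSq_eq_zero).mp h2
  have hcont : Continuous j₀ := by
    rw [continuous_iff_continuousAt]
    intro x
    by_cases hfx : f x = 0
    · have hjx : j₀ x = 0 := by simp [hj₀, hfx]
      rw [ContinuousAt, hjx]
      refine squeeze_zero_norm hb ?_
      have := ((map_continuous g).tendsto x).norm
      rwa [hg0 x hfx, norm_zero] at this
    · have hne : {y | f y ≠ 0} ∈ 𝓝 x :=
        (isOpen_compl_singleton.preimage (map_continuous f)).mem_nhds hfx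
      have h1 : ContinuousAt
          (fun y => (starRingEnd ℂ) (g y) * f y * ((starRingEnd ℂ) (f y))⁻¹) x := by
        refine ((Complex.continuous_conj.comp (map_continuous g)).continuousAt.mul
          (map_continuous f).continuousAt).mul (ContinuousAt.inv₀
            (Complex.continuous_conj.comp (map_continuous f)).continuousAt ?_)
        simpa using hfx
      refine h1.congr ?_
      filter_upwards [hne] with y hy
      simp [hj₀, if_neg hy]
  obtain ⟨j, hj⟩ := mkC₀ g hcont hb
  refine ⟨j, fun x hx => ?_⟩
  rw [hj]
  by_cases hfx : f x = 0
  · simp [hj₀, hfx]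
  · rw [hj₀]
    simp only [if_neg hfx]
    rw [hg x hx, map_mul]
    have hcf : (starRingEnd ℂ) (f x) ≠ 0 := by simpa using hfx
    field_simp

end AuxOperator

section AuxExtension

open Filter Topology Set
open scoped Classical OnePoint

variable {m : X → ℂ}

lemma regB_subset_frontier : regB m ⊆ frontier (reg m) := fun _ hx => hx.1

lemma regInfty_subset_frontier : regInfty m ⊆ frontier (reg m) := fun _ hx => hx.1

lemma singSuppR_subset_frontier : singSuppR m ⊆ frontier (reg m) := fun _ hx => hx.1

lemma mem_singSuppR_iff {x : X} :
    x ∈ singSuppR m ↔ x ∈ frontier (reg m) ∧ x ∉ regB m ∧ x ∉ regInfty m := by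
  simp [singSuppR, not_or, and_assoc]

/-- Coverage of the space by the four regions. -/
lemma cover (hm : Dense (reg m)) (x : X) :
    x ∈ reg m ∨ x ∈ regB m ∨ x ∈ regInfty m ∨ x ∈ singSuppR m := by
  by_cases hx : x ∈ reg m
  · exact Or.inl hx
  · have hxf : x ∈ frontier (reg m) := by
      rw [(isOpen_reg m).frontier_eq, hm.closure_eq]
      exact ⟨trivial, hx⟩
    by_cases hB : x ∈ regB m
    · exact Or.inr (Or.inl hB)
    by_cases hI : x ∈ regInfty m
    · exact Or.inr (Or.inr (Or.inl hI))
    · exact Or.inr (Or.inr (Or.inr (mem_singSuppR_iff.mpr ⟨hxf, hB, hI⟩)))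

lemma not_regB_of_regInfty (hm : Dense (reg m)) {x : X} (hx : x ∈ regInfty m) :
    x ∉ regB m := by
  rintro ⟨-, U1, hU1, hU1c, hxU1, mt1, hc1, he1⟩
  obtain ⟨-, U2, hU2, hU2c, hxU2, mt2, hc2, he2, hinf⟩ := hx
  have := locUnique (W := reg m) hm (κ := fun y => ((m y : ℂ) : OnePoint ℂ))
    (φ₁ := fun y => ((mt1 y : ℂ) : OnePoint ℂ)) (φ₂ := mt2) hU1 hU2
    (OnePoint.continuous_coe.comp_continuousOn hc1) hc2
    (fun y hy => congrArg _ (he1 hy)) (fun y hy => (he2 y hy).symm) hxU1 hxU2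
  rw [hinf] at this
  exact OnePoint.coe_ne_infty _ this

/-- The extension of `m` to `reg m ∪ regB m` given by choice of local extensions. -/
noncomputable def Mext (m : X → ℂ) : X → ℂ := fun x =>
  if hx : x ∈ regB m then hx.2.choose_spec.2.2.2.choose x else m x

lemma Mext_reg {x : X} (hx : x ∈ reg m) : Mext m x = m x :=
  dif_neg fun h => not_frontier_of_reg hx h.1

lemma Mext_val (hm : Dense (reg m)) {x : X} (hx : x ∈ regB m) {U : Set X} {mt : X → ℂ}
    (hU : IsOpen U) (hxU : x ∈ U) (hc : ContinuousOn mt U)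
    (he : Set.EqOn m mt (U ∩ reg m)) : Mext m x = mt x := by
  rw [Mext, dif_pos hx]
  have hspec := hx.2.choose_spec
  have h2 := hspec.2.2.2.choose_spec
  exact locUnique hm hspec.1 hU h2.1 hc h2.2 he hspec.2.2.1 hxU

lemma Mext_val_onePoint (hm : Dense (reg m)) {x : X} (hx : x ∈ regB m) {U : Set X}
    {mt : X → OnePoint ℂ} (hU : IsOpen U) (hxU : x ∈ U) (hc : ContinuousOn mt U)
    (he : ∀ y ∈ U ∩ reg m, mt y = (m y : OnePoint ℂ)) :
    mt x = ((Mext m x : ℂ) : OnePoint ℂ) := by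
  rw [Mext, dif_pos hx]
  have hspec := hx.2.choose_spec
  have h2 := hspec.2.2.2.choose_spec
  exact locUnique (W := reg m) hm (κ := fun y => ((m y : ℂ) : OnePoint ℂ)) hU hspec.1 hc
    (OnePoint.continuous_coe.comp_continuousOn h2.1)
    (fun y hy => (he y hy).symm) (fun y hy => congrArg _ (h2.2 hy)) hxU hspec.2.2.1

lemma regInfty_val (hm : Dense (reg m)) {x : X} (hx : x ∈ regInfty m) {U : Set X}
    {mt : X → OnePoint ℂ} (hU : IsOpen U) (hxU : x ∈ U) (hc : ContinuousOn mt U)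
    (he : ∀ y ∈ U ∩ reg m, mt y = (m y : OnePoint ℂ)) : mt x = OnePoint.infty := by
  obtain ⟨-, V, hV, hVc, hxV, ν, hcν, heν, hnuI⟩ := hx
  have := locUnique (W := reg m) hm (κ := fun y => ((m y : ℂ) : OnePoint ℂ)) hU hV hc hcν
    (fun y hy => (he y hy).symm) (fun y hy => (heν y hy).symm) hxU hxV
  rw [this, hnuI]

/-- Key construction: a continuous global function agreeing with `g₀ ⬝ q(m)` on `reg m`,
for `q` a continuous function on the Riemann sphere and `g₀` vanishing on the residual
singular support. -/
lemma phi (hm : Dense (reg m)) (g₀ : C₀(X, ℂ)) (hg₀ : ∀ x ∈ singSuppR m, g₀ x = 0)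
    (q : OnePoint ℂ → ℂ) (hqc : Continuous q) (hqb : ∀ v, ‖q v‖ ≤ 1) :
    ∃ F : C₀(X, ℂ), (∀ x ∈ reg m, F x = g₀ x * q ((m x : ℂ) : OnePoint ℂ)) ∧
      ∀ x, ‖F x‖ ≤ ‖g₀ x‖ := by
  set Mop : X → OnePoint ℂ := fun y =>
    if y ∈ reg m ∪ regB m then ((Mext m y : ℂ) : OnePoint ℂ) else OnePoint.infty with hMop
  set F₀ : X → ℂ := fun y => g₀ y * q (Mop y) with hF₀
  have hreg : ∀ y ∈ reg m, Mop y = ((m y : ℂ) : OnePoint ℂ) := by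
    intro y hy
    simp only [hMop]
    rw [if_pos (show y ∈ reg m ∪ regB m from Or.inl hy), Mext_reg hy]
  have hb : ∀ y, ‖F₀ y‖ ≤ ‖g₀ y‖ := by
    intro y
    simp only [hF₀]
    calc ‖g₀ y * q (Mop y)‖ = ‖g₀ y‖ * ‖q (Mop y)‖ := norm_mul _ _
    _ ≤ ‖g₀ y‖ * 1 := mul_le_mul_of_nonneg_left (hqb _) (norm_nonneg _)
    _ = ‖g₀ y‖ := mul_one _
  have hcont : Continuous F₀ := by
    rw [continuous_iff_continuousAt]
    intro x
    rcases cover hm x with hx | hx | hx | hx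
    · have h1 : ContinuousAt (fun y => g₀ y * q ((m y : ℂ) : OnePoint ℂ)) x :=
        (map_continuous g₀).continuousAt.mul (hqc.continuousAt.comp
          (OnePoint.continuous_coe.continuousAt.comp
            ((continuousOn_reg m).continuousAt ((isOpen_reg m).mem_nhds hx))))
      refine h1.congr (Filter.eventuallyEq_of_mem ((isOpen_reg m).mem_nhds hx) ?_)
      intro y hy
      simp only [hF₀, hreg y hy]
    · obtain ⟨hxf, U, hU, hUc, hxU, mt, hcmt, hemt⟩ := hx
      have hUeq : ∀ y ∈ U, F₀ y = g₀ y * q ((mt y : ℂ) : OnePoint ℂ) := by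
        intro y hyU
        by_cases hy : y ∈ reg m
        · simp only [hF₀, hreg y hy, hemt ⟨hyU, hy⟩]
        · have hyf : y ∈ frontier (reg m) := by
            rw [(isOpen_reg m).frontier_eq]
            exact ⟨hUc hyU, hy⟩
          have hyB : y ∈ regB m := ⟨hyf, U, hU, hUc, hyU, mt, hcmt, hemt⟩
          simp only [hF₀, hMop]
          rw [if_pos (show y ∈ reg m ∪ regB m from Or.inr hyB),
            Mext_val hm hyB hU hyU hcmt hemt]
      have h1 : ContinuousAt (fun y => g₀ y * q ((mt y : ℂ) : OnePoint ℂ)) x :=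
        (map_continuous g₀).continuousAt.mul (hqc.continuousAt.comp
          (OnePoint.continuous_coe.continuousAt.comp (hcmt.continuousAt (hU.mem_nhds hxU))))
      exact h1.congr (Filter.eventuallyEq_of_mem (hU.mem_nhds hxU) (fun y hy => (hUeq y hy).symm))
    · obtain ⟨hxf, U, hU, hUc, hxU, mt, hcmt, hemt, hmtx⟩ := hx
      have hUeq : ∀ y ∈ U, F₀ y = g₀ y * q (mt y) := by
        intro y hyU
        by_cases hy : y ∈ reg m
        · simp only [hF₀, hreg y hy, hemt y ⟨hyU, hy⟩]
        · rcases cover hm y with h | hB | hI | hS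
          · exact absurd h hy
          · simp only [hF₀, hMop]
            rw [if_pos (show y ∈ reg m ∪ regB m from Or.inr hB),
              Mext_val_onePoint hm hB hU hyU hcmt hemt]
          · have hmty : mt y = OnePoint.infty := regInfty_val hm hI hU hyU hcmt hemt
            have hyn : y ∉ reg m ∪ regB m := by
              rintro (h | h)
              · exact hy h
              · exact (not_regB_of_regInfty hm hI) h
            simp only [hF₀, hMop]
            rw [if_neg hyn, hmty]
          · simp only [hF₀, hg₀ y hS, zero_mul]
      have h1 : ContinuousAt (fun y => g₀ y * q (mt y)) x :=
        (map_continuous g₀).continuousAt.mul (hqc.continuousAt.comp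
          (hcmt.continuousAt (hU.mem_nhds hxU)))
      exact h1.congr (Filter.eventuallyEq_of_mem (hU.mem_nhds hxU) (fun y hy => (hUeq y hy).symm))
    · have hx0 : g₀ x = 0 := hg₀ x hx
      have hF0 : F₀ x = 0 := by simp [hF₀, hx0]
      rw [ContinuousAt, hF0]
      refine squeeze_zero_norm hb ?_
      have := ((map_continuous g₀).tendsto x).norm
      rwa [hx0, norm_zero] at this
  obtain ⟨F, hF⟩ := mkC₀ g₀ hcont hb
  refine ⟨F, fun x hx => ?_, fun x => by rw [hF]; exact hb x⟩
  rw [hF]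
  simp only [hF₀, hreg x hx]

/-- The function `(1 + |z|²)⁻¹` on the Riemann sphere. -/
noncomputable def q1 : OnePoint ℂ → ℂ := fun v =>
  OnePoint.rec 0 (fun z => (((1 + ‖z‖ ^ 2)⁻¹ : ℝ) : ℂ)) v

/-- The function `z (1 + |z|²)⁻¹` on the Riemann sphere. -/
noncomputable def q2 : OnePoint ℂ → ℂ := fun v =>
  OnePoint.rec 0 (fun z => z * (((1 + ‖z‖ ^ 2)⁻¹ : ℝ) : ℂ)) v

lemma q1_infty : q1 OnePoint.infty = 0 := rfl

lemma q2_infty : q2 OnePoint.infty = 0 := rfl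

lemma q1_coe (z : ℂ) : q1 ((z : ℂ) : OnePoint ℂ) = (((1 + ‖z‖ ^ 2)⁻¹ : ℝ) : ℂ) := rfl

lemma q2_coe (z : ℂ) : q2 ((z : ℂ) : OnePoint ℂ) = z * (((1 + ‖z‖ ^ 2)⁻¹ : ℝ) : ℂ) := rfl

lemma aux_ne (z : ℂ) : (1 + ‖z‖ ^ 2) ≠ 0 := by positivity

lemma q1_cont : Continuous q1 := by
  rw [OnePoint.continuous_iff]
  constructor
  · show Filter.Tendsto (fun z : ℂ => (((1 + ‖z‖ ^ 2)⁻¹ : ℝ) : ℂ))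
      (Filter.coclosedCompact ℂ) (𝓝 (0 : ℂ))
    rw [Filter.coclosedCompact_eq_cocompact]
    have h1 : Filter.Tendsto (fun z : ℂ => 1 + ‖z‖ ^ 2) (Filter.cocompact ℂ) Filter.atTop := by
      refine Filter.tendsto_atTop_add_const_left _ _ ?_
      exact (tendsto_norm_cocompact_atTop.atTop_mul_atTop₀ tendsto_norm_cocompact_atTop).congr
        (fun z => (sq ‖z‖).symm)
    have h2 := tendsto_inv_atTop_zero.comp h1
    have h3 := (Complex.continuous_ofReal.tendsto 0).comp h2
    rw [Complex.ofReal_zero] at h3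
    exact h3.congr fun z => rfl
  · exact Complex.continuous_ofReal.comp ((continuous_const.add
      ((continuous_norm.pow 2))).inv₀ aux_ne)

lemma q2_cont : Continuous q2 := by
  rw [OnePoint.continuous_iff]
  constructor
  · show Filter.Tendsto (fun z : ℂ => z * (((1 + ‖z‖ ^ 2)⁻¹ : ℝ) : ℂ))
      (Filter.coclosedCompact ℂ) (𝓝 (0 : ℂ))
    rw [Filter.coclosedCompact_eq_cocompact]
    have hbd : ∀ z : ℂ, ‖z * (((1 + ‖z‖ ^ 2)⁻¹ : ℝ) : ℂ)‖ ≤ 2 * (1 + ‖z‖)⁻¹ := by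
      intro z
      have h1 : (0:ℝ) < 1 + ‖z‖ := by positivity
      have h2 : (0:ℝ) < 1 + ‖z‖ ^ 2 := by positivity
      rw [norm_mul, Complex.norm_real, norm_inv, Real.norm_eq_abs, abs_of_pos h2,
        show ‖z‖ * (1 + ‖z‖ ^ 2)⁻¹ = ‖z‖ / (1 + ‖z‖ ^ 2) from (div_eq_mul_inv _ _).symm,
        show (2:ℝ) * (1 + ‖z‖)⁻¹ = 2 / (1 + ‖z‖) from (div_eq_mul_inv _ _).symm,
        div_le_div_iff₀ h2 h1]
      nlinarith [norm_nonneg z, sq_nonneg (‖z‖ - 1), sq_nonneg ‖z‖]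
    have hto : Filter.Tendsto (fun z : ℂ => 2 * (1 + ‖z‖)⁻¹) (Filter.cocompact ℂ) (𝓝 0) := by
      have h1 : Filter.Tendsto (fun z : ℂ => 1 + ‖z‖) (Filter.cocompact ℂ) Filter.atTop :=
        Filter.tendsto_atTop_add_const_left _ _ tendsto_norm_cocompact_atTop
      have := (tendsto_inv_atTop_zero.comp h1).const_mul (2:ℝ)
      simpa using this
    exact squeeze_zero_norm hbd hto
  · exact continuous_id.mul (Complex.continuous_ofReal.comp ((continuous_const.add
      ((continuous_norm.pow 2))).inv₀ aux_ne))

lemma q1_bound (v : OnePoint ℂ) : ‖q1 v‖ ≤ 1 := by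
  induction v using OnePoint.rec with
  | infty => rw [show (∞ : OnePoint ℂ) = OnePoint.infty from rfl, q1_infty]; simp
  | coe z =>
    rw [q1_coe, Complex.norm_real, Real.norm_eq_abs,
      abs_of_pos (by positivity : (0:ℝ) < (1 + ‖z‖ ^ 2)⁻¹)]
    rw [inv_le_one_iff₀]
    right
    nlinarith [sq_nonneg ‖z‖]

lemma q2_bound (v : OnePoint ℂ) : ‖q2 v‖ ≤ 1 := by
  induction v using OnePoint.rec with
  | infty => rw [show (∞ : OnePoint ℂ) = OnePoint.infty from rfl, q2_infty]; simp
  | coe z =>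
    rw [q2_coe, norm_mul, Complex.norm_real, Real.norm_eq_abs,
      abs_of_pos (by positivity : (0:ℝ) < (1 + ‖z‖ ^ 2)⁻¹)]
    rw [← le_div_iff₀ (by positivity), one_div, inv_inv]
    nlinarith [norm_nonneg z, sq_nonneg (‖z‖ - 1)]

end AuxExtension

open Filter Topology Set

/-- For `m : X → ℂ` with `reg(m)` dense: `t_m` is normal, `t_m* t_m` is
essentially self-adjoint, `D(t_m* t_m)` is an essential core for `t_m`, and
`Range(1 + t_m* t_m) = {g ∈ C₀(X) | g ≡ 0 on singsuppʳ(m)}`, which is essential. -/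
theorem mulOp_normal_core_range (m : X → ℂ) (hm : Dense (reg m))
    (t : CStarReg.Unbounded C₀(X, ℂ) C₀(X, ℂ) C₀(X, ℂ)) (htm : IsMulOpGraph m t.graph) :
    -- (1) `t_m` is normal and `t_m* t_m` is essentially self-adjoint
    t.adjCompGraph = t.compAdjGraph ∧
    adjSet C₀(X, ℂ) t.adjCompGraph = adjSet C₀(X, ℂ) (adjSet C₀(X, ℂ) t.adjCompGraph) ∧
    -- (2) `D(t_m* t_m)` is an essential core for `t_m`
    ortho C₀(X, ℂ) (restrictSet t.graph (Prod.fst '' t.adjCompGraph)) =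
      ortho C₀(X, ℂ) t.graph ∧
    -- (3) the range of `1 + t_m* t_m`
    Prod.snd '' oneAddSet t.adjCompGraph =
      {g : C₀(X, ℂ) | ∀ x ∈ singSuppR m, g x = 0} ∧
    IsEssential C₀(X, ℂ) (Prod.snd '' oneAddSet t.adjCompGraph) := by
  classical
  have hGr : t.graph = {p : C₀(X, ℂ) × C₀(X, ℂ) | ∀ x ∈ reg m, p.2 x = m x * p.1 x} :=
    graph_eq hm htm
  have hconjm : ContinuousOn (fun x => (starRingEnd ℂ) (m x)) (reg m) :=
    Complex.continuous_conj.comp_continuousOn (continuousOn_reg m)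
  have hw2 : ContinuousOn (fun x => (starRingEnd ℂ) (m x) * m x) (reg m) :=
    hconjm.mul (continuousOn_reg m)
  -- the adjoint of `t`
  have hAdj : adjSet C₀(X, ℂ) t.graph
      = {q : C₀(X, ℂ) × C₀(X, ℂ) | ∀ x ∈ reg m, q.2 x = (starRingEnd ℂ) (m x) * q.1 x} := by
    refine adjSet_eq_of hm m t.graph (fun p hp => by rw [hGr] at hp; exact hp) ?_
    intro x₀ hx₀
    obtain ⟨f, hf1, hfc, hfs⟩ := exists_bump (isOpen_reg m) hx₀
    obtain ⟨g, hg⟩ := mulCpt (continuousOn_reg m) hfc hfs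
    refine ⟨(f, g), by rw [hGr]; exact fun x hx => by rw [hg x, if_pos hx], hf1, ?_⟩
    rw [hg x₀, if_pos hx₀, hf1, mul_one]
  -- description of `t* t`
  have hT : t.adjCompGraph = {p : C₀(X, ℂ) × C₀(X, ℂ) |
      (∃ gg : C₀(X, ℂ), ∀ x ∈ reg m, gg x = m x * p.1 x) ∧
      ∀ x ∈ reg m, p.2 x = (starRingEnd ℂ) (m x) * m x * p.1 x} := by
    ext p
    constructor
    · rintro ⟨y, hy1, hy2⟩
      rw [hGr] at hy1
      rw [hAdj] at hy2
      exact ⟨⟨y, hy1⟩, fun x hx => by rw [hy2 x hx, hy1 x hx]; ring⟩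
    · rintro ⟨⟨gg, hgg⟩, hk⟩
      refine ⟨gg, by rw [hGr]; exact hgg, ?_⟩
      rw [hAdj]
      intro x hx
      rw [hk x hx, hgg x hx]
      ring
  -- description of `t t*`
  have hT' : t.compAdjGraph = {p : C₀(X, ℂ) × C₀(X, ℂ) |
      (∃ j : C₀(X, ℂ), ∀ x ∈ reg m, j x = (starRingEnd ℂ) (m x) * p.1 x) ∧
      ∀ x ∈ reg m, p.2 x = (starRingEnd ℂ) (m x) * m x * p.1 x} := by
    ext p
    constructor
    · rintro ⟨y, hy1, hy2⟩
      rw [hAdj] at hy1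
      rw [hGr] at hy2
      exact ⟨⟨y, hy1⟩, fun x hx => by rw [hy2 x hx, hy1 x hx]; ring⟩
    · rintro ⟨⟨j, hj⟩, hk⟩
      refine ⟨j, by rw [hAdj]; exact hj, ?_⟩
      rw [hGr]
      intro x hx
      rw [hk x hx, hj x hx]
      ring
  -- (1) normality
  have hC1 : t.adjCompGraph = t.compAdjGraph := by
    rw [hT, hT']
    ext p
    simp only [Set.mem_setOf_eq]
    constructor
    · rintro ⟨⟨gg, hgg⟩, hk⟩
      exact ⟨exists_conj_witness hm hgg hk, hk⟩
    · rintro ⟨⟨j, hj⟩, hk⟩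
      refine ⟨?_, hk⟩
      have hk' : ∀ x ∈ reg m,
          p.2 x = (starRingEnd ℂ) ((starRingEnd ℂ) (m x)) * (starRingEnd ℂ) (m x) * p.1 x := by
        intro x hx
        rw [hk x hx, Complex.conj_conj]
        ring
      obtain ⟨j', hj'⟩ := exists_conj_witness hm (μ := fun x => (starRingEnd ℂ) (m x)) hj hk'
      exact ⟨j', fun x hx => by rw [hj' x hx, Complex.conj_conj]⟩
  -- (1') essential self-adjointness of `t* t`
  have hupT : ∀ p ∈ t.adjCompGraph, ∀ x ∈ reg m,
      p.2 x = ((starRingEnd ℂ) (m x) * m x) * p.1 x := by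
    intro p hp
    rw [hT] at hp
    exact hp.2
  have hloT : ∀ x₀ ∈ reg m, ∃ p ∈ t.adjCompGraph,
      p.1 x₀ = 1 ∧ p.2 x₀ = (starRingEnd ℂ) (m x₀) * m x₀ := by
    intro x₀ hx₀
    obtain ⟨f, hf1, hfc, hfs⟩ := exists_bump (isOpen_reg m) hx₀
    obtain ⟨gm, hgm⟩ := mulCpt (continuousOn_reg m) hfc hfs
    obtain ⟨k2, hk2⟩ := mulCpt hw2 hfc hfs
    refine ⟨(f, k2), ?_, hf1, by rw [hk2 x₀, if_pos hx₀, hf1, mul_one]⟩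
    rw [hT]
    exact ⟨⟨gm, fun x hx => by rw [hgm x, if_pos hx]⟩, fun x hx => by rw [hk2 x, if_pos hx]⟩
  have hA1 : adjSet C₀(X, ℂ) t.adjCompGraph = {q : C₀(X, ℂ) × C₀(X, ℂ) |
      ∀ x ∈ reg m, q.2 x = (starRingEnd ℂ) ((starRingEnd ℂ) (m x) * m x) * q.1 x} :=
    adjSet_eq_of hm (fun x => (starRingEnd ℂ) (m x) * m x) _ hupT hloT
  have hA2 : adjSet C₀(X, ℂ) (adjSet C₀(X, ℂ) t.adjCompGraph)
      = adjSet C₀(X, ℂ) t.adjCompGraph := by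
    rw [hA1]
    have hwc : ContinuousOn (fun x => (starRingEnd ℂ) ((starRingEnd ℂ) (m x) * m x)) (reg m) :=
      Complex.continuous_conj.comp_continuousOn hw2
    have hres := adjSet_eq_of hm (fun x => (starRingEnd ℂ) ((starRingEnd ℂ) (m x) * m x))
      {q : C₀(X, ℂ) × C₀(X, ℂ) |
        ∀ x ∈ reg m, q.2 x = (starRingEnd ℂ) ((starRingEnd ℂ) (m x) * m x) * q.1 x}
      (fun p hp => hp) ?_
    · rw [hres]
      ext q
      simp only [Set.mem_setOf_eq, map_mul, Complex.conj_conj]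
      constructor
      · intro h x hx
        rw [h x hx]
        ring
      · intro h x hx
        rw [h x hx]
        ring
    · intro x₀ hx₀
      obtain ⟨f, hf1, hfc, hfs⟩ := exists_bump (isOpen_reg m) hx₀
      obtain ⟨g, hg⟩ := mulCpt hwc hfc hfs
      refine ⟨(f, g), fun x hx => by rw [hg x, if_pos hx], hf1, ?_⟩
      rw [hg x₀, if_pos hx₀, hf1, mul_one]
  -- (2) essential core
  have hC3 : ortho C₀(X, ℂ) (restrictSet t.graph (Prod.fst '' t.adjCompGraph)) =
      ortho C₀(X, ℂ) t.graph := by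
    ext u
    simp only [CStarReg.ortho, Set.mem_setOf_eq]
    constructor
    · intro hu p hp
      have hE : ∀ x ∈ reg m,
          (starRingEnd ℂ) (u.1 x) + (starRingEnd ℂ) (u.2 x) * m x = 0 := by
        intro x₀ hx₀
        obtain ⟨f, hf1, hfc, hfs⟩ := exists_bump (isOpen_reg m) hx₀
        obtain ⟨gm, hgm⟩ := mulCpt (continuousOn_reg m) hfc hfs
        obtain ⟨k2, hk2⟩ := mulCpt hw2 hfc hfs
        have hmemT : (f, k2) ∈ t.adjCompGraph := by
          rw [hT]
          exact ⟨⟨gm, fun x hx => by rw [hgm x, if_pos hx]⟩,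
            fun x hx => by rw [hk2 x, if_pos hx]⟩
        have hmemR : (f, gm) ∈ restrictSet t.graph (Prod.fst '' t.adjCompGraph) := by
          refine ⟨by rw [hGr]; exact fun x hx => by rw [hgm x, if_pos hx],
            ⟨(f, k2), hmemT, rfl⟩⟩
        have hev : (inner C₀(X, ℂ) u (f, gm) : C₀(X, ℂ)) x₀ = (0 : C₀(X, ℂ)) x₀ :=
          congrArg (fun v : C₀(X, ℂ) => v x₀) (hu (f, gm) hmemR)
        rw [inner_prod_apply] at hev
        simp only [hf1, mul_one, ZeroAtInftyContinuousMap.coe_zero, Pi.zero_apply] at hev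
        rw [hgm x₀, if_pos hx₀, hf1, mul_one] at hev
        exact hev
      rw [hGr] at hp
      refine DFunLike.coe_injective ?_
      refine Continuous.ext_on hm (map_continuous _) (map_continuous _) ?_
      intro x hx
      show (inner C₀(X, ℂ) u p : C₀(X, ℂ)) x = (0 : C₀(X, ℂ)) x
      rw [inner_prod_apply, hp x hx]
      simp only [ZeroAtInftyContinuousMap.coe_zero, Pi.zero_apply]
      linear_combination (p.1 x) * hE x hx
    · intro hu p hp
      exact hu p hp.1
  -- (3) range of `1 + t* t`
  have hC4 : Prod.snd '' oneAddSet t.adjCompGraph =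
      {g : C₀(X, ℂ) | ∀ x ∈ singSuppR m, g x = 0} := by
    ext g₀
    constructor
    · rintro ⟨p, ⟨k, hkT, hp2⟩, rfl⟩
      rw [hT] at hkT
      obtain ⟨⟨gg, hgg⟩, hk⟩ := hkT
      intro x hx
      obtain ⟨hxf, hxB, hxI⟩ := mem_singSuppR_iff.mp hx
      have hf0 : p.1 x = 0 := by
        by_contra hne
        apply hxB
        refine ⟨hxf, {z | p.1 z ≠ 0},
          isOpen_compl_singleton.preimage (map_continuous p.1),
          by rw [hm.closure_eq]; exact Set.subset_univ _, hne,
          fun z => gg z * (p.1 z)⁻¹, ?_, ?_⟩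
        · exact (map_continuous gg).continuousOn.mul
            (ContinuousOn.inv₀ (map_continuous p.1).continuousOn fun z hz => hz)
        · intro z hz
          have hz1 : p.1 z ≠ 0 := hz.1
          show m z = gg z * (p.1 z)⁻¹
          rw [hgg z hz.2]
          field_simp
      have hk0 : k x = 0 := by
        by_contra hkne
        apply hxI
        have hypos : 0 < ‖k x‖ := norm_pos_iff.mpr hkne
        set c : ℝ := ‖k x‖ / 2 with hc
        have hcpos : 0 < c := by positivity
        set U : Set X := {z | c < ‖k z‖} with hUdef
        have hUopen : IsOpen U := isOpen_lt continuous_const (map_continuous k).norm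
        have hxU : x ∈ U := by
          simp only [hUdef, Set.mem_setOf_eq, hc]
          linarith
        have hfU : ∀ z ∈ U ∩ reg m, p.1 z ≠ 0 := by
          intro z hz h0
          have hz0 := hk z hz.2
          rw [h0, mul_zero] at hz0
          have hz1 : c < ‖k z‖ := hz.1
          rw [hz0, norm_zero] at hz1
          linarith
        have hkeyn : ∀ z, ‖gg z‖ ^ 2 = ‖k z‖ * ‖p.1 z‖ := by
          intro z
          have hkz := key_identity hm hgg hk z
          have h1 := congrArg norm hkz
          rw [Complex.norm_real, norm_mul, RCLike.norm_conj] at h1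
          calc ‖gg z‖ ^ 2 = Complex.normSq (gg z) := by
                rw [Complex.normSq_eq_norm_sq]
          _ = ‖Complex.normSq (gg z)‖ := (Real.norm_of_nonneg (Complex.normSq_nonneg _)).symm
          _ = ‖k z‖ * ‖p.1 z‖ := h1
        set mtI : X → OnePoint ℂ := fun z =>
          if p.1 z = 0 then OnePoint.infty else ((gg z * (p.1 z)⁻¹ : ℂ) : OnePoint ℂ) with hmtI
        refine ⟨hxf, U, hUopen, by rw [hm.closure_eq]; exact Set.subset_univ _, hxU, mtI,
          ?_, ?_, by simp only [hmtI, if_pos hf0]⟩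
        · intro z hzU
          by_cases hfz : p.1 z = 0
          · show Filter.Tendsto mtI (𝓝[U] z) (𝓝 (mtI z))
            rw [show mtI z = OnePoint.infty from by simp only [hmtI, if_pos hfz]]
            rw [OnePoint.hasBasis_nhds_infty.tendsto_right_iff]
            rintro s ⟨hscl, hscpt⟩
            obtain ⟨r, hr⟩ := hscpt.isBounded.subset_closedBall (0 : ℂ)
            set r' : ℝ := max r 0 + 1 with hr'
            have hr'pos : 0 < r' := by
              have := le_max_right r 0
              simp only [hr']
              linarith
            have hrbound : ∀ w ∈ s, ‖w‖ ≤ r' := by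
              intro w hw
              have := hr hw
              rw [Metric.mem_closedBall, dist_zero_right] at this
              have h2 := le_max_left r 0
              simp only [hr']
              linarith
            set ε : ℝ := c / (r' ^ 2 + 1) with hε
            have hεpos : 0 < ε := by positivity
            have hev1 : ∀ᶠ z' in 𝓝[U] z, ‖p.1 z'‖ < ε := by
              have h0 : Filter.Tendsto (fun z' => ‖p.1 z'‖) (𝓝 z) (𝓝 ‖p.1 z‖) :=
                ((map_continuous p.1).tendsto z).norm
              rw [hfz, norm_zero] at h0
              exact (h0.eventually_lt_const hεpos).filter_mono nhdsWithin_le_nhds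
            filter_upwards [hev1, self_mem_nhdsWithin] with z' hz1 hz2
            by_cases hfz' : p.1 z' = 0
            · refine Set.mem_union_right _ ?_
              simp only [hmtI, if_pos hfz']
              rfl
            · have hp1pos : 0 < ‖p.1 z'‖ := norm_pos_iff.mpr hfz'
              have hyz' : c < ‖k z'‖ := hz2
              have e1 : (r' ^ 2 + 1) * ‖p.1 z'‖ < c := by
                rw [hε, lt_div_iff₀ (by positivity : (0:ℝ) < r' ^ 2 + 1)] at hz1
                linarith [mul_comm (r' ^ 2 + 1) ‖p.1 z'‖]
              have hp1ne : ‖p.1 z'‖ ≠ 0 := ne_of_gt hp1pos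
              have hval : ‖gg z' * (p.1 z')⁻¹‖ ^ 2 * ‖p.1 z'‖ = ‖k z'‖ := by
                rw [norm_mul, norm_inv, mul_pow, hkeyn z', mul_assoc]
                have hstep : ‖p.1 z'‖⁻¹ ^ 2 * ‖p.1 z'‖ = ‖p.1 z'‖⁻¹ := by
                  rw [sq, mul_assoc, inv_mul_cancel₀ hp1ne, mul_one]
                rw [hstep, mul_assoc, mul_inv_cancel₀ hp1ne, mul_one]
              have e3 : r' ^ 2 < ‖gg z' * (p.1 z')⁻¹‖ ^ 2 := by
                have h5 : r' ^ 2 * ‖p.1 z'‖ < ‖gg z' * (p.1 z')⁻¹‖ ^ 2 * ‖p.1 z'‖ := by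
                  rw [hval]
                  nlinarith
                exact lt_of_mul_lt_mul_right h5 hp1pos.le
              have hbig : r' < ‖gg z' * (p.1 z')⁻¹‖ := by
                nlinarith [norm_nonneg (gg z' * (p.1 z')⁻¹)]
              have hnotin : gg z' * (p.1 z')⁻¹ ∉ s := fun hmem =>
                absurd (hrbound _ hmem) (not_le.mpr hbig)
              refine Set.mem_union_left _ ?_
              simp only [hmtI, if_neg hfz']
              exact ⟨_, hnotin, rfl⟩
          · have hne : {z' | p.1 z' ≠ 0} ∈ 𝓝 z :=
              (isOpen_compl_singleton.preimage (map_continuous p.1)).mem_nhds hfz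
            have h1 : ContinuousAt (fun z' => ((gg z' * (p.1 z')⁻¹ : ℂ) : OnePoint ℂ)) z :=
              OnePoint.continuous_coe.continuousAt.comp
                ((map_continuous gg).continuousAt.mul
                  (ContinuousAt.inv₀ (map_continuous p.1).continuousAt hfz))
            refine (h1.congr ?_).continuousWithinAt
            filter_upwards [hne] with z' hz'
            simp only [hmtI, if_neg hz']
        · intro z hz
          have hfz := hfU z hz
          simp only [hmtI, if_neg hfz]
          congr 1
          rw [hgg z hz.2]
          field_simp
      rw [hp2]
      show (p.1 + k) x = 0
      rw [ZeroAtInftyContinuousMap.coe_add, Pi.add_apply, hf0, hk0, add_zero]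
    · intro hg₀
      obtain ⟨f, hfval, -⟩ := phi hm g₀ hg₀ q1 q1_cont q1_bound
      obtain ⟨wit, hwval, -⟩ := phi hm g₀ hg₀ q2 q2_cont q2_bound
      refine ⟨(f, g₀), ⟨g₀ - f, ?_, by show g₀ = f + (g₀ - f); abel⟩, rfl⟩
      rw [hT]
      constructor
      · refine ⟨wit, fun x hx => ?_⟩
        rw [hwval x hx, q2_coe, hfval x hx, q1_coe]
        ring
      · intro x hx
        have hfx := hfval x hx
        rw [q1_coe] at hfx
        have hmm : (starRingEnd ℂ) (m x) * m x = ((‖m x‖ ^ 2 : ℝ) : ℂ) := by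
          rw [← Complex.normSq_eq_conj_mul_self]
          congr 1
          rw [Complex.normSq_eq_norm_sq]
        have h7 : ((1 + ‖m x‖ ^ 2 : ℝ) : ℂ) * f x = g₀ x := by
          rw [hfx, mul_comm (g₀ x) _, ← mul_assoc, ← Complex.ofReal_mul,
            mul_inv_cancel₀ (aux_ne (m x)), Complex.ofReal_one, one_mul]
        show g₀ x - f x = (starRingEnd ℂ) (m x) * m x * f x
        rw [hmm]
        push_cast at h7 ⊢
        linear_combination h7.symm
  -- (3') essentiality of the range
  have hC5 : IsEssential C₀(X, ℂ) (Prod.snd '' oneAddSet t.adjCompGraph) := by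
    show CStarReg.ortho C₀(X, ℂ) (Prod.snd '' oneAddSet t.adjCompGraph) = {0}
    rw [hC4]
    ext u
    simp only [CStarReg.ortho, Set.mem_setOf_eq, Set.mem_singleton_iff]
    constructor
    · intro hu
      have hu0 : ∀ x ∈ reg m, u x = 0 := by
        intro x₀ hx₀
        obtain ⟨f, hf1, hfc, hfs⟩ := exists_bump (isOpen_reg m) hx₀
        have hfZ : f ∈ {g : C₀(X, ℂ) | ∀ x ∈ singSuppR m, g x = 0} := by
          intro z hz
          refine image_eq_zero_of_notMem_tsupport fun hmem => ?_
          exact not_frontier_of_reg (hfs hmem) (singSuppR_subset_frontier hz)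
        have hev : (inner C₀(X, ℂ) u f : C₀(X, ℂ)) x₀ = (0 : C₀(X, ℂ)) x₀ :=
          congrArg (fun v : C₀(X, ℂ) => v x₀) (hu f hfZ)
        rw [inner_apply', hf1, mul_one] at hev
        simp only [ZeroAtInftyContinuousMap.coe_zero, Pi.zero_apply] at hev
        have := congrArg (starRingEnd ℂ) hev
        rwa [Complex.conj_conj, map_zero] at this
      refine DFunLike.coe_injective ?_
      refine Continuous.ext_on hm (map_continuous u) (map_continuous (0 : C₀(X, ℂ))) ?_
      intro x hx
      simp [hu0 x hx]
    · rintro rfl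
      intro gz hgz
      rw [inner_def']
      simp
  exact ⟨hC1, hA2.symm, hC3, hC4, hC5⟩

end CommutativeCase
end
end

section
/- Let A be a C*-algebra acting nondegenerately on a Hilbert space H and let t be a densely defined closed operator on H with 0 ∈ ρ(t). Then t is associated with A (i.e. a_t, a_{t*}, b_t ∈ M(A)) if and only if t^{-1} ∈ M(A). -/
noncomputable section

namespace CStarAff

variable {H : Type*} [NormedAddCommGroup H] [InnerProductSpace ℂ H] [CompleteSpace H]

/-- The multiplier set `M(S) = {x | xS ⊆ S and Sx ⊆ S}` of a set of bounded operators. -/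
def MultSet (S : Set (H →L[ℂ] H)) : Set (H →L[ℂ] H) :=
  {x | (∀ a ∈ S, x * a ∈ S) ∧ ∀ a ∈ S, a * x ∈ S}

/-- `S` acts nondegenerately on `H`: `S · H` spans a dense subspace. -/
def Nondegenerate (S : Set (H →L[ℂ] H)) : Prop :=
  Dense (↑(Submodule.span ℂ {y : H | ∃ a ∈ S, ∃ x : H, y = a x}) : Set H)

/-- `r` is the (bounded, everywhere defined) inverse of `T - lam • I`; this says exactly
that `lam` belongs to the resolvent set of `T`, with resolvent `r`. -/
def IsResolventInv (T : H →ₗ.[ℂ] H) (lam : ℂ) (r : H →L[ℂ] H) : Prop :=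
  (∀ y : T.domain, r (T y - lam • (y : H)) = (y : H)) ∧
  ∀ x : H, ∃ h : r x ∈ T.domain, T ⟨r x, h⟩ - lam • (r x) = x

/-- `a = (I + T* T)⁻¹` as an everywhere defined bounded operator. -/
def IsAt (T : H →ₗ.[ℂ] H) (a : H →L[ℂ] H) : Prop :=
  ∀ x : H, ∃ (h1 : a x ∈ T.domain) (h2 : T ⟨a x, h1⟩ ∈ T.adjoint.domain),
    a x + T.adjoint ⟨T ⟨a x, h1⟩, h2⟩ = x

/-- `a' = (I + T T*)⁻¹` as an everywhere defined bounded operator. -/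
def IsAtStar (T : H →ₗ.[ℂ] H) (a' : H →L[ℂ] H) : Prop :=
  ∀ y : H, ∃ (h1 : a' y ∈ T.adjoint.domain) (h2 : T.adjoint ⟨a' y, h1⟩ ∈ T.domain),
    a' y + T ⟨T.adjoint ⟨a' y, h1⟩, h2⟩ = y

/-- `b` is the bounded extension of `T (I + T* T)⁻¹`, i.e. `b = T ∘ a` where
`a = (I + T* T)⁻¹`. -/
def IsBt (T : H →ₗ.[ℂ] H) (a b : H →L[ℂ] H) : Prop :=
  ∀ x : H, ∃ h : a x ∈ T.domain, b x = T ⟨a x, h⟩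

/-- `T` is affiliated with `S` in the sense of Woronowicz: `a_T ∈ M(S)`, `b_T ∈ M(S)` and
`a_T · S` is dense in `S`. -/
def Affiliated (T : H →ₗ.[ℂ] H) (S : Set (H →L[ℂ] H)) : Prop :=
  ∃ a b : H →L[ℂ] H, IsAt T a ∧ IsBt T a b ∧ a ∈ MultSet S ∧ b ∈ MultSet S ∧
    S ⊆ closure ((fun d => a * d) '' S)

/-- `T` is associated with `S`: the operators `a_T = (I + T*T)⁻¹`, `a_{T*} = (I + TT*)⁻¹`
and `b_T = T(I + T*T)⁻¹` all belong to the multiplier algebra `M(S)`. -/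
def Associated (T : H →ₗ.[ℂ] H) (S : Set (H →L[ℂ] H)) : Prop :=
  ∃ a a' b : H →L[ℂ] H, IsAt T a ∧ IsAtStar T a' ∧ IsBt T a b ∧
    a ∈ MultSet S ∧ a' ∈ MultSet S ∧ b ∈ MultSet S

end CStarAff

section Statements

open CStarAff

section Aux

open CStarAff ContinuousLinearMap RCLike

local notation "⟪" x ", " y "⟫" => @inner ℂ _ _ x y

variable {H : Type*} [NormedAddCommGroup H] [InnerProductSpace ℂ H] [CompleteSpace H]
variable {A : StarSubalgebra ℂ (H →L[ℂ] H)}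

theorem one_mem_mult : (1 : H →L[ℂ] H) ∈ MultSet (A : Set (H →L[ℂ] H)) :=
  ⟨fun a ha => by rwa [one_mul], fun a ha => by rwa [mul_one]⟩

theorem mul_mem_mult {x y : H →L[ℂ] H} (hx : x ∈ MultSet (A : Set (H →L[ℂ] H)))
    (hy : y ∈ MultSet (A : Set (H →L[ℂ] H))) : x * y ∈ MultSet (A : Set (H →L[ℂ] H)) :=
  ⟨fun a ha => by rw [mul_assoc]; exact hx.1 _ (hy.1 a ha),
   fun a ha => by rw [← mul_assoc]; exact hy.2 _ (hx.2 a ha)⟩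

theorem star_mem_mult {x : H →L[ℂ] H} (hx : x ∈ MultSet (A : Set (H →L[ℂ] H))) :
    star x ∈ MultSet (A : Set (H →L[ℂ] H)) := by
  constructor
  · intro a ha
    have h1 : star a * x ∈ A := hx.2 _ (star_mem ha)
    have h2 := star_mem h1
    rwa [star_mul, star_star] at h2
  · intro a ha
    have h1 : x * star a ∈ A := hx.1 _ (star_mem ha)
    have h2 := star_mem h1
    rwa [star_mul, star_star] at h2

theorem smul_mem_mult (c : ℂ) {x : H →L[ℂ] H} (hx : x ∈ MultSet (A : Set (H →L[ℂ] H))) :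
    c • x ∈ MultSet (A : Set (H →L[ℂ] H)) :=
  ⟨fun a ha => by rw [smul_mul_assoc]; exact A.smul_mem (hx.1 a ha) c,
   fun a ha => by rw [mul_smul_comm]; exact A.smul_mem (hx.2 a ha) c⟩

theorem sub_mem_mult {x y : H →L[ℂ] H} (hx : x ∈ MultSet (A : Set (H →L[ℂ] H)))
    (hy : y ∈ MultSet (A : Set (H →L[ℂ] H))) : x - y ∈ MultSet (A : Set (H →L[ℂ] H)) :=
  ⟨fun a ha => by rw [sub_mul]; exact A.sub_mem (hx.1 a ha) (hy.1 a ha),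
   fun a ha => by rw [mul_sub]; exact A.sub_mem (hx.2 a ha) (hy.2 a ha)⟩

theorem pow_mem_mult {x : H →L[ℂ] H} (hx : x ∈ MultSet (A : Set (H →L[ℂ] H))) :
    ∀ n : ℕ, x ^ n ∈ MultSet (A : Set (H →L[ℂ] H))
  | 0 => by rw [pow_zero]; exact one_mem_mult
  | n + 1 => by rw [pow_succ]; exact mul_mem_mult (pow_mem_mult hx n) hx

theorem isClosed_mult (hA : IsClosed (A : Set (H →L[ℂ] H))) :
    IsClosed (MultSet (A : Set (H →L[ℂ] H))) := by
  have heq : MultSet (A : Set (H →L[ℂ] H)) =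
      (⋂ a ∈ (A : Set (H →L[ℂ] H)), {x : H →L[ℂ] H | x * a ∈ A}) ∩
      (⋂ a ∈ (A : Set (H →L[ℂ] H)), {x : H →L[ℂ] H | a * x ∈ A}) := by
    ext x
    simp only [MultSet, Set.mem_setOf_eq, Set.mem_inter_iff, Set.mem_iInter, SetLike.mem_coe]
  rw [heq]
  refine IsClosed.inter ?_ ?_ <;> refine isClosed_biInter fun a ha => ?_
  · exact hA.preimage (continuous_id.mul continuous_const)
  · exact hA.preimage (continuous_const.mul continuous_id)

theorem tsum_mem_mult (hA : IsClosed (A : Set (H →L[ℂ] H))) {f : ℕ → H →L[ℂ] H}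
    (hf : Summable f) (hmem : ∀ n, f n ∈ MultSet (A : Set (H →L[ℂ] H))) :
    (∑' n, f n) ∈ MultSet (A : Set (H →L[ℂ] H)) := by
  refine (isClosed_mult hA).mem_of_tendsto hf.hasSum (Filter.Eventually.of_forall fun s => ?_)
  constructor
  · intro a ha
    rw [Finset.sum_mul]
    exact sum_mem fun i _ => (hmem i).1 a ha
  · intro a ha
    rw [Finset.mul_sum]
    exact sum_mem fun i _ => (hmem i).2 a ha

theorem exists_inv (hA : IsClosed (A : Set (H →L[ℂ] H))) {r : H →L[ℂ] H}
    (hr : r ∈ MultSet (A : Set (H →L[ℂ] H))) (hrs : star r ∈ MultSet (A : Set (H →L[ℂ] H))) :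
    ∃ q : H →L[ℂ] H, q ∈ MultSet (A : Set (H →L[ℂ] H)) ∧
      q * (1 + star r * r) = 1 ∧ (1 + star r * r) * q = 1 := by
  set M0 : ℝ := ‖r‖ ^ 2 with hM0
  have hM0nn : (0:ℝ) ≤ M0 := sq_nonneg _
  set β : ℝ := (1 + M0)⁻¹ with hβ
  have hβpos : 0 < β := by positivity
  have hβ1 : β * (1 + M0) = 1 := inv_mul_cancel₀ (by positivity)
  set γ : ℝ := β * M0 with hγ
  have hγnn : (0:ℝ) ≤ γ := by positivity
  have hβγ : β + γ = 1 := by rw [hγ]; nlinarith [hβ1]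
  have hγ1 : γ < 1 := by linarith
  set m : H →L[ℂ] H := star r * r with hm
  set k : H →L[ℂ] H := (γ : ℂ) • 1 - (β : ℂ) • m with hk
  have hknorm : ‖k‖ ≤ γ := by
    refine ContinuousLinearMap.opNorm_le_bound _ hγnn fun x => ?_
    have hkx : k x = (γ:ℂ) • x - (β:ℂ) • ((star r) (r x)) := by
      simp [hk, hm, ContinuousLinearMap.sub_apply, ContinuousLinearMap.smul_apply,
        ContinuousLinearMap.mul_apply]
    have hre : re ⟪(γ:ℂ) • x, (β:ℂ) • ((star r) (r x))⟫ = γ * β * ‖r x‖^2 := by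
      rw [inner_smul_left, inner_smul_right, ContinuousLinearMap.star_eq_adjoint,
        ContinuousLinearMap.adjoint_inner_right]
      rw [Complex.conj_ofReal, RCLike.re_to_complex, Complex.re_ofReal_mul,
        Complex.re_ofReal_mul, ← RCLike.re_to_complex, inner_self_eq_norm_sq]
      ring
    have h1 : ‖k x‖^2 = ‖(γ:ℂ)•x‖^2 - 2 * re ⟪(γ:ℂ)•x, (β:ℂ)•((star r) (r x))⟫
        + ‖(β:ℂ)•((star r) (r x))‖^2 := by
      rw [hkx]; exact norm_sub_sq _ _
    have h2 : ‖(γ:ℂ)•x‖ = γ * ‖x‖ := by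
      rw [norm_smul]; simp [abs_of_nonneg hγnn]
    have h3 : ‖(β:ℂ)•((star r) (r x))‖ ≤ β * (‖r‖ * ‖r x‖) := by
      rw [norm_smul]
      simp only [Complex.norm_real, Real.norm_eq_abs, abs_of_nonneg hβpos.le]
      have := ((star r).le_opNorm (r x))
      rw [norm_star] at this
      exact mul_le_mul_of_nonneg_left this hβpos.le
    have h5 : ‖(β:ℂ)•((star r) (r x))‖^2 ≤ β * γ * ‖r x‖^2 := by
      have h4 := pow_le_pow_left₀ (norm_nonneg _) h3 2
      calc ‖(β:ℂ)•((star r) (r x))‖^2 ≤ (β * (‖r‖ * ‖r x‖))^2 := h4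
        _ = β * γ * ‖r x‖^2 := by rw [hγ, hM0]; ring
    have h6 : ‖k x‖^2 ≤ (γ * ‖x‖)^2 := by
      rw [h1, hre, h2]
      have h5' : 0 ≤ β * γ * ‖r x‖^2 := by positivity
      linarith [h5, h5']
    have h7 := Real.sqrt_le_sqrt h6
    rwa [Real.sqrt_sq (norm_nonneg _), Real.sqrt_sq (by positivity)] at h7
  have hklt : ‖k‖ < 1 := lt_of_le_of_lt hknorm hγ1
  have hkmem : k ∈ MultSet (A : Set (H →L[ℂ] H)) :=
    sub_mem_mult (smul_mem_mult _ one_mem_mult) (smul_mem_mult _ (mul_mem_mult hrs hr))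
  have hsummable : Summable (fun n => k ^ n) := summable_geometric_of_norm_lt_one hklt
  have hSmem : (∑' n, k ^ n) ∈ MultSet (A : Set (H →L[ℂ] H)) :=
    tsum_mem_mult hA hsummable (fun n => pow_mem_mult hkmem n)
  have hc : (γ:ℂ) = 1 - (β:ℂ) := by
    have h : γ = 1 - β := by linarith
    exact_mod_cast congrArg (fun t : ℝ => (t : ℂ)) h
  have hkid : (1 : H →L[ℂ] H) - k = (β : ℂ) • (1 + m) := by
    rw [hk, hc]
    module
  refine ⟨(β : ℂ) • ∑' n, k ^ n, smul_mem_mult _ hSmem, ?_, ?_⟩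
  · rw [smul_mul_assoc, ← mul_smul_comm, ← hkid]
    exact geom_series_mul_neg k hklt
  · rw [mul_smul_comm, ← smul_mul_assoc, ← hkid]
    exact mul_neg_geom_series k hklt

end Aux

open ContinuousLinearMap RCLike ComplexConjugate LinearPMap

local notation "⟪" x ", " y "⟫" => @inner ℂ _ _ x y

variable {H : Type*} [NormedAddCommGroup H] [InnerProductSpace ℂ H] [CompleteSpace H]

/-- Let `A` be a C*-algebra acting nondegenerately on a Hilbert space
`H` and `T` a densely defined closed operator on `H` with `0 ∈ ρ(T)` (with resolvent `r`,
i.e. `r = T⁻¹`). Then `T` is associated with `A` iff `T⁻¹ ∈ M(A)`. -/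
theorem associated_iff_inverse_multiplier
    (A : StarSubalgebra ℂ (H →L[ℂ] H)) (hA : IsClosed (A : Set (H →L[ℂ] H)))
    (hnd : Nondegenerate (A : Set (H →L[ℂ] H)))
    (T : H →ₗ.[ℂ] H) (hdense : Dense (T.domain : Set H))
    (hclosed : IsClosed (T.graph : Set (H × H)))
    (r : H →L[ℂ] H) (hr : IsResolventInv T 0 r) :
    Associated T (A : Set (H →L[ℂ] H)) ↔ r ∈ MultSet (A : Set (H →L[ℂ] H)) := by
  classical
  have hrdom : ∀ x : H, r x ∈ T.domain := fun x => (hr.2 x).choose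
  have hTrx : ∀ x : H, T ⟨r x, hrdom x⟩ = x := fun x => by
    have h := (hr.2 x).choose_spec
    simpa using h
  have hTr : ∀ y : T.domain, r (T y) = (y : H) := fun y => by
    have h := hr.1 y
    simpa using h
  have hfa := LinearPMap.adjoint_isFormalAdjoint hdense
  have key1 : ∀ (u : H) (h1 : u ∈ T.domain) (h2 : T ⟨u, h1⟩ ∈ T.adjoint.domain) (v : T.domain),
      ⟪T.adjoint ⟨T ⟨u, h1⟩, h2⟩, (v : H)⟫ = ⟪T ⟨u, h1⟩, T v⟫ :=
    fun u h1 h2 v => hfa ⟨T ⟨u, h1⟩, h2⟩ v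
  have hsdom : ∀ z : H, (star r) z ∈ T.adjoint.domain := fun z =>
    T.mem_adjoint_domain_of_exists ((star r) z) ⟨z, fun x => by
      rw [ContinuousLinearMap.star_eq_adjoint, ContinuousLinearMap.adjoint_inner_left,
        hTr x]⟩
  have hsval : ∀ z : H, T.adjoint ⟨(star r) z, hsdom z⟩ = z := fun z =>
    LinearPMap.adjoint_apply_eq hdense ⟨(star r) z, hsdom z⟩ (fun x => by
      show ⟪z, (x : H)⟫ = ⟪(star r) z, T x⟫
      rw [ContinuousLinearMap.star_eq_adjoint, ContinuousLinearMap.adjoint_inner_left,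
        hTr x])
  have hTr' : ∀ (u : H) (h : u ∈ T.domain), r (T ⟨u, h⟩) = u := fun u h => hTr ⟨u, h⟩
  constructor
  · rintro ⟨a, a', b, hAt, hAt', hBt, ha, ha', hb⟩
    rcases subsingleton_or_nontrivial H with hH | hH
    · have hsing : Subsingleton (H →L[ℂ] H) :=
        ⟨fun f g => ContinuousLinearMap.ext fun x => Subsingleton.elim _ _⟩
      exact ⟨fun c hc => by rw [Subsingleton.elim (r * c) c]; exact hc,
        fun c hc => by rw [Subsingleton.elim (c * r) c]; exact hc⟩
    · have hrne : r ≠ 0 := by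
        intro h0
        obtain ⟨x₀, hx₀⟩ := exists_ne (0 : H)
        apply hx₀
        have h1 := hTrx x₀
        have h2 : (⟨r x₀, hrdom x₀⟩ : T.domain) = 0 := Subtype.ext (by simp [h0])
        rw [h2, LinearPMap.map_zero] at h1
        exact h1.symm
      have hrpos : (0:ℝ) < ‖r‖ := norm_pos_iff.mpr hrne
      have had : ∀ z : H, a z ∈ T.domain := fun z => (hAt z).choose
      have had2 : ∀ z : H, T ⟨a z, had z⟩ ∈ T.adjoint.domain :=
        fun z => (hAt z).choose_spec.choose
      have hae : ∀ z : H, a z + T.adjoint ⟨T ⟨a z, had z⟩, had2 z⟩ = z :=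
        fun z => (hAt z).choose_spec.choose_spec
      have e2 : ∀ z v : H, ⟪z, a v⟫ = ⟪a z, a v⟫ + ⟪T ⟨a z, had z⟩, T ⟨a v, had v⟩⟫ := by
        intro z v
        conv_lhs => rw [← hae z]
        rw [inner_add_left, key1 (a z) (had z) (had2 z) ⟨a v, had v⟩]
      have e1 : ∀ z v : H, ⟪a z, v⟫ = ⟪a z, a v⟫ + ⟪T ⟨a z, had z⟩, T ⟨a v, had v⟩⟫ := by
        intro z v
        conv_lhs => rw [← hae v]
        rw [inner_add_right]
        congr 1
        calc ⟪a z, T.adjoint ⟨T ⟨a v, had v⟩, had2 v⟩⟫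
            = conj ⟪T.adjoint ⟨T ⟨a v, had v⟩, had2 v⟩, a z⟫ := (inner_conj_symm _ _).symm
          _ = conj ⟪T ⟨a v, had v⟩, T ⟨a z, had z⟩⟫ := by
              rw [key1 (a v) (had v) (had2 v) ⟨a z, had z⟩]
          _ = ⟪T ⟨a z, had z⟩, T ⟨a v, had v⟩⟫ := inner_conj_symm _ _
      have hsym : ∀ z v : H, ⟪a z, v⟫ = ⟪z, a v⟫ := fun z v => (e1 z v).trans (e2 z v).symm
      have hinner : ∀ z : H, re ⟪z, a z⟫ = ‖a z‖^2 + ‖T ⟨a z, had z⟩‖^2 := fun z => by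
        rw [e2 z z, _root_.map_add, inner_self_eq_norm_sq, inner_self_eq_norm_sq]
      set ε : ℝ := (‖r‖^2)⁻¹ with hε
      have hεpos : 0 < ε := by positivity
      have hbound : ∀ z : H, ‖a z‖ ≤ (1 + ε)⁻¹ * ‖z‖ := by
        intro z
        have hTnorm : ‖a z‖ ≤ ‖r‖ * ‖T ⟨a z, had z⟩‖ := by
          conv_lhs => rw [← hTr' (a z) (had z)]
          exact r.le_opNorm _
        have hCS := re_inner_le_norm (𝕜 := ℂ) z (a z)
        have hq := hinner z
        rcases eq_or_lt_of_le (norm_nonneg (a z)) with hz0 | hz0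
        · rw [← hz0]; positivity
        · rw [← div_eq_inv_mul, le_div_iff₀ (by positivity)]
          have hεr : ε * ‖r‖^2 = 1 := inv_mul_cancel₀ (by positivity)
          have h2' : ‖a z‖^2 ≤ ‖r‖^2 * ‖T ⟨a z, had z⟩‖^2 := by
            nlinarith [hTnorm, norm_nonneg (a z), norm_nonneg (T ⟨a z, had z⟩), hrpos.le]
          have ht2 : ε * ‖a z‖^2 ≤ ‖T ⟨a z, had z⟩‖^2 := by
            have h3' := mul_le_mul_of_nonneg_left h2' hεpos.le
            calc ε * ‖a z‖^2 ≤ ε * (‖r‖^2 * ‖T ⟨a z, had z⟩‖^2) := h3'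
              _ = (ε * ‖r‖^2) * ‖T ⟨a z, had z⟩‖^2 := by ring
              _ = ‖T ⟨a z, had z⟩‖^2 := by rw [hεr, one_mul]
          nlinarith [hCS, hq, ht2, hz0]
      have hanorm : ‖a‖ < 1 := by
        have h1 : ‖a‖ ≤ (1+ε)⁻¹ := ContinuousLinearMap.opNorm_le_bound a (by positivity) hbound
        have h3 : (1:ℝ) < 1 + ε := by linarith
        have h2 : (1+ε)⁻¹ < 1 := inv_lt_one_of_one_lt₀ h3
        linarith
      have hbe : ∀ v : H, b v = T ⟨a v, had v⟩ := fun v => by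
        obtain ⟨h, hh⟩ := hBt v
        exact hh
      have hkey : (1 - a) * r = star b := by
        ext x
        have hx1 : ((1 - a) * r) x = r x - a (r x) := by
          simp [ContinuousLinearMap.mul_apply, ContinuousLinearMap.sub_apply]
        rw [hx1]
        refine hdense.eq_of_inner_left ℂ fun v _ => ?_
        have hR : ⟪(star b) x, (v:H)⟫ = ⟪x, b v⟫ := by
          rw [ContinuousLinearMap.star_eq_adjoint]
          exact ContinuousLinearMap.adjoint_inner_left b (v:H) x
        rw [hR, hbe (v:H)]
        have hTv : T.adjoint ⟨T ⟨a (v:H), had (v:H)⟩, had2 (v:H)⟩ = (v:H) - a (v:H) :=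
          eq_sub_of_add_eq' (hae (v:H))
        calc ⟪r x - a (r x), (v:H)⟫
            = ⟪r x, (v:H)⟫ - ⟪a (r x), (v:H)⟫ := inner_sub_left _ _ _
          _ = ⟪r x, (v:H)⟫ - ⟪r x, a (v:H)⟫ := by rw [hsym (r x) (v:H)]
          _ = ⟪r x, (v:H) - a (v:H)⟫ := (inner_sub_right _ _ _).symm
          _ = ⟪r x, T.adjoint ⟨T ⟨a (v:H), had (v:H)⟩, had2 (v:H)⟩⟫ := by rw [hTv]
          _ = conj ⟪T.adjoint ⟨T ⟨a (v:H), had (v:H)⟩, had2 (v:H)⟩, r x⟫ :=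
              (inner_conj_symm _ _).symm
          _ = conj ⟪T ⟨a (v:H), had (v:H)⟩, T ⟨r x, hrdom x⟩⟫ := by
              rw [key1 (a (v:H)) (had (v:H)) (had2 (v:H)) ⟨r x, hrdom x⟩]
          _ = ⟪T ⟨r x, hrdom x⟩, T ⟨a (v:H), had (v:H)⟩⟫ := inner_conj_symm _ _
          _ = ⟪x, T ⟨a (v:H), had (v:H)⟩⟫ := by rw [hTrx x]
      have hsummable : Summable (fun n : ℕ => a ^ n) := summable_geometric_of_norm_lt_one hanorm
      have hrS : r = (∑' n : ℕ, a ^ n) * star b := by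
        calc r = 1 * r := (one_mul r).symm
          _ = ((∑' n : ℕ, a ^ n) * (1 - a)) * r := by rw [geom_series_mul_neg a hanorm]
          _ = (∑' n : ℕ, a ^ n) * ((1 - a) * r) := mul_assoc _ _ _
          _ = (∑' n : ℕ, a ^ n) * star b := by rw [hkey]
      rw [hrS]
      exact mul_mem_mult (tsum_mem_mult hA hsummable fun n => pow_mem_mult ha n)
        (star_mem_mult hb)
  · intro hrM
    have hsM : star r ∈ MultSet (A : Set (H →L[ℂ] H)) := star_mem_mult hrM
    obtain ⟨q, hqM, hq1, hq2⟩ := exists_inv hA hrM hsM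
    obtain ⟨q', hq'M, hq'1, hq'2⟩ := exists_inv hA hsM (by rwa [star_star])
    rw [star_star] at hq'1 hq'2
    refine ⟨r * q * star r, star r * q' * r, q * star r, ?_, ?_, ?_,
      mul_mem_mult (mul_mem_mult hrM hqM) hsM,
      mul_mem_mult (mul_mem_mult hsM hq'M) hrM,
      mul_mem_mult hqM hsM⟩
    · intro x
      have happ := congrArg (fun f : H →L[ℂ] H => f ((star r) x)) hq2
      simp only [ContinuousLinearMap.mul_apply, ContinuousLinearMap.add_apply,
        ContinuousLinearMap.one_apply] at happ
      have hqs : q ((star r) x) = (star r) (x - r (q ((star r) x))) := by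
        rw [_root_.map_sub]
        exact eq_sub_of_add_eq happ
      have h1 : (r * q * star r) x ∈ T.domain := hrdom (q ((star r) x))
      have hTax : T ⟨(r * q * star r) x, h1⟩ = q ((star r) x) := hTrx (q ((star r) x))
      have h2 : T ⟨(r * q * star r) x, h1⟩ ∈ T.adjoint.domain := by
        rw [hTax, hqs]
        exact hsdom _
      refine ⟨h1, h2, ?_⟩
      have hval : (⟨T ⟨(r * q * star r) x, h1⟩, h2⟩ : T.adjoint.domain)
          = ⟨(star r) (x - r (q ((star r) x))), hsdom _⟩ := Subtype.ext (hTax.trans hqs)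
      rw [hval, hsval]
      show r (q ((star r) x)) + (x - r (q ((star r) x))) = x
      abel
    · intro y
      have happ := congrArg (fun f : H →L[ℂ] H => f (r y)) hq'2
      simp only [ContinuousLinearMap.mul_apply, ContinuousLinearMap.add_apply,
        ContinuousLinearMap.one_apply] at happ
      have hq'r : q' (r y) = r (y - (star r) (q' (r y))) := by
        rw [_root_.map_sub]
        exact eq_sub_of_add_eq happ
      have h1 : (star r * q' * r) y ∈ T.adjoint.domain := hsdom (q' (r y))
      have hadj : T.adjoint ⟨(star r * q' * r) y, h1⟩ = q' (r y) := hsval (q' (r y))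
      have h2 : T.adjoint ⟨(star r * q' * r) y, h1⟩ ∈ T.domain := by
        rw [hadj, hq'r]
        exact hrdom _
      refine ⟨h1, h2, ?_⟩
      have hval : (⟨T.adjoint ⟨(star r * q' * r) y, h1⟩, h2⟩ : T.domain)
          = ⟨r (y - (star r) (q' (r y))), hrdom _⟩ := Subtype.ext (hadj.trans hq'r)
      rw [hval, hTrx]
      show (star r) (q' (r y)) + (y - (star r) (q' (r y))) = y
      abel
    · intro x
      exact ⟨hrdom (q ((star r) x)), (hTrx (q ((star r) x))).symm⟩

end Statements
end
end
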